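/- Every finite poset that is a flower is sub-representable. -/

import Mathlib

section helpers
variable {α : Type*} [PartialOrder α]

/-- inclusion as an order embedding -/
def inclEmb {s t : Set α} (h : s ⊆ t) : ↥s ↪o ↥t :=
  { toFun := Set.inclusion h
    inj' := Set.inclusion_injective h
    map_rel_iff' := Iff.rfl }

noncomputable def chainLO {s : Set α} (hs : IsChain (· ≤ ·) s) : LinearOrder ↥s :=
  { (inferInstance : PartialOrder ↥s) with
    le_total := fun a b => by
      rcases eq_or_ne a b with h | h
      · exact Or.inl h.le
      · exact hs a.2 b.2 (Subtype.coe_injective.ne h)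
    toDecidableLE := Classical.decRel _
    toDecidableEq := Classical.decRel _
    toDecidableLT := Classical.decRel _ }

lemma chain_embed [Finite α] {s t : Set α} (hs : IsChain (· ≤ ·) s) (ht : IsChain (· ≤ ·) t)
    (hc : s.ncard ≤ t.ncard) : Nonempty (↥s ↪o ↥t) := by
  letI := chainLO hs
  letI := chainLO ht
  haveI : Fintype ↥s := Fintype.ofFinite _
  haveI : Fintype ↥t := Fintype.ofFinite _
  have hcs : Fintype.card ↥s = s.ncard := by
    rw [← Nat.card_eq_fintype_card, Nat.card_coe_set_eq]
  have hct : Fintype.card ↥t = t.ncard := by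
    rw [← Nat.card_eq_fintype_card, Nat.card_coe_set_eq]
  have es := Fintype.orderIsoFinOfCardEq ↥s hcs
  have et := Fintype.orderIsoFinOfCardEq ↥t hct
  have cle : Fin s.ncard ↪o Fin t.ncard :=
    { toFun := Fin.castLE hc
      inj' := Fin.castLE_injective hc
      map_rel_iff' := Iff.rfl }
  exact ⟨(es.symm.toOrderEmbedding.trans cle).trans et.toOrderEmbedding⟩
end helpers

section flower
variable {α : Type*} [PartialOrder α] (x : α)

def Cset : Set α := {y | y ≤ x}
def Uset : Set α := {y | x < y}

variable {x}

lemma mem_C_or_U (htot : ∀ y : α, y < x ∨ y = x ∨ x < y) (y : α) :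
    y ∈ Cset x ∨ y ∈ Uset x := by
  rcases htot y with h | h | h
  · exact Or.inl h.le
  · exact Or.inl h.le
  · exact Or.inr h

lemma C_lt_U {y z : α} (hy : y ∈ Cset x) (hz : z ∈ Uset x) : y < z :=
  hy.trans_lt hz

lemma U_le_iff (hU : IsAntichain (· ≤ ·) (Uset x)) {y z : α} (hy : y ∈ Uset x)
    (hz : z ∈ Uset x) : y ≤ z ↔ y = z := by
  constructor
  · intro h; by_contra hne; exact hU hy hz hne h
  · rintro rfl; exact le_rfl

lemma C_U_disj {y : α} (hy : y ∈ Cset x) (hy' : y ∈ Uset x) : False :=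
  absurd (hy.trans_lt hy') (lt_irrefl _)

lemma Cset_chain (hCh : IsChain (· ≤ ·) {y : α | y < x}) : IsChain (· ≤ ·) (Cset x) := by
  intro y hy z hz hne
  rcases lt_or_eq_of_le (hy : y ≤ x) with h1 | h1
  · rcases lt_or_eq_of_le (hz : z ≤ x) with h2 | h2
    · exact hCh h1 h2 hne
    · exact Or.inl (h1.le.trans h2.symm.le)
  · subst h1; exact Or.inr hz

lemma incomp_mem_U (htot : ∀ y : α, y < x ∨ y = x ∨ x < y)
    (hCh : IsChain (· ≤ ·) (Cset x)) {y z : α}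
    (h1 : ¬ y ≤ z) (h2 : ¬ z ≤ y) : y ∈ Uset x ∧ z ∈ Uset x := by
  rcases mem_C_or_U htot y with hy | hy
  · rcases mem_C_or_U htot z with hz | hz
    · rcases hCh hy hz (by rintro rfl; exact h1 le_rfl) with h | h
      · exact absurd h h1
      · exact absurd h h2
    · exact absurd (C_lt_U hy hz).le h1
  · rcases mem_C_or_U htot z with hz | hz
    · exact absurd (C_lt_U hz hy).le h2
    · exact ⟨hy, hz⟩

lemma ncard_decomp (htot : ∀ y : α, y < x ∨ y = x ∨ x < y) [Finite α] (S : Set α) :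
    S.ncard = (S ∩ Cset x).ncard + (S ∩ Uset x).ncard := by
  rw [← Set.ncard_union_eq]
  · congr 1
    ext y
    simp only [Set.mem_union, Set.mem_inter_iff]
    constructor
    · intro hy; rcases mem_C_or_U htot y with h | h
      · exact Or.inl ⟨hy, h⟩
      · exact Or.inr ⟨hy, h⟩
    · rintro (⟨h, _⟩ | ⟨h, _⟩) <;> exact h
  · rw [Set.disjoint_left]
    rintro y ⟨-, hy1⟩ ⟨-, hy2⟩
    exact absurd (hy1.trans_lt hy2) (lt_irrefl _)

variable [Finite α]

lemma embed_of_le (htot : ∀ y : α, y < x ∨ y = x ∨ x < y)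
    (hCh : IsChain (· ≤ ·) (Cset x)) (hU : IsAntichain (· ≤ ·) (Uset x)) {S T : Set α}
    (hc : (S ∩ Cset x).ncard ≤ (T ∩ Cset x).ncard)
    (ha : (S ∩ Uset x).ncard ≤ (T ∩ Uset x).ncard) : Nonempty (↥S ↪o ↥T) := by
  obtain ⟨f⟩ := chain_embed (hCh.mono (Set.inter_subset_right)) (hCh.mono (Set.inter_subset_right)) hc
  haveI : Fintype ↥(S ∩ Uset x) := Fintype.ofFinite _
  haveI : Fintype ↥(T ∩ Uset x) := Fintype.ofFinite _
  obtain ⟨g⟩ : Nonempty (↥(S ∩ Uset x) ↪ ↥(T ∩ Uset x)) := by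
    apply Function.Embedding.nonempty_of_card_le
    rwa [← Nat.card_eq_fintype_card, ← Nat.card_eq_fintype_card,
      Nat.card_coe_set_eq, Nat.card_coe_set_eq]
  classical
  refine ⟨OrderEmbedding.ofMapLEIff (fun s =>
    if h : (s : α) ∈ Cset x then
      ⟨(f ⟨s.1, ⟨s.2, h⟩⟩ : ↥(T ∩ Cset x)).1, (f ⟨s.1, ⟨s.2, h⟩⟩).2.1⟩
    else
      ⟨(g ⟨s.1, ⟨s.2, (mem_C_or_U htot s.1).resolve_left h⟩⟩).1,
        (g ⟨s.1, ⟨s.2, (mem_C_or_U htot s.1).resolve_left h⟩⟩).2.1⟩) ?_⟩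
  intro a b
  by_cases hac : (a : α) ∈ Cset x <;> by_cases hbc : (b : α) ∈ Cset x
  · simp only [dif_pos hac, dif_pos hbc, Subtype.mk_le_mk]
    rw [show ((f ⟨a.1, ⟨a.2, hac⟩⟩ : ↥(T ∩ Cset x)) : α) ≤ (f ⟨b.1, ⟨b.2, hbc⟩⟩ : ↥(T ∩ Cset x)) ↔
        (f ⟨a.1, ⟨a.2, hac⟩⟩ ≤ f ⟨b.1, ⟨b.2, hbc⟩⟩) from Iff.rfl, f.map_rel_iff]
    exact Iff.rfl
  · simp only [dif_pos hac, dif_neg hbc]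
    have hbu := (mem_C_or_U htot b.1).resolve_left hbc
    refine iff_of_true ?_ (C_lt_U hac hbu).le
    exact (C_lt_U (f ⟨a.1, ⟨a.2, hac⟩⟩).2.2
      (g ⟨b.1, ⟨b.2, hbu⟩⟩).2.2).le
  · simp only [dif_neg hac, dif_pos hbc]
    have hau := (mem_C_or_U htot a.1).resolve_left hac
    refine iff_of_false ?_ ?_
    · intro hle
      exact absurd ((Subtype.coe_le_coe.2 hle).trans_lt
        (C_lt_U (f ⟨b.1, ⟨b.2, hbc⟩⟩).2.2 (g ⟨a.1, ⟨a.2, hau⟩⟩).2.2)) (lt_irrefl _)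
    · intro hle
      exact absurd ((Subtype.coe_le_coe.2 hle).trans_lt (C_lt_U hbc hau)) (lt_irrefl _)
  · simp only [dif_neg hac, dif_neg hbc, Subtype.mk_le_mk]
    have hau := (mem_C_or_U htot a.1).resolve_left hac
    have hbu := (mem_C_or_U htot b.1).resolve_left hbc
    rw [U_le_iff hU (g ⟨a.1, ⟨a.2, hau⟩⟩).2.2 (g ⟨b.1, ⟨b.2, hbu⟩⟩).2.2]
    constructor
    · intro h
      have h2 := g.injective (Subtype.ext h)
      have h3 := congrArg Subtype.val h2
      exact le_of_eq (Subtype.ext h3)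
    · intro h
      have h' : (a : α) = b := (U_le_iff hU hau hbu).1 h
      exact congrArg Subtype.val (congrArg g (Subtype.ext h'))

lemma chain_of_small (htot : ∀ y : α, y < x ∨ y = x ∨ x < y)
    (hCh : IsChain (· ≤ ·) (Cset x)) {S : Set α} (h1 : (S ∩ Uset x).ncard ≤ 1) :
    IsChain (· ≤ ·) S := by
  intro y hy z hz hne
  rcases mem_C_or_U htot y with hyc | hyu
  · rcases mem_C_or_U htot z with hzc | hzu
    · exact hCh hyc hzc hne
    · exact Or.inl (C_lt_U hyc hzu).le
  · rcases mem_C_or_U htot z with hzc | hzu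
    · exact Or.inr (C_lt_U hzc hyu).le
    · exfalso
      have : 1 < (S ∩ Uset x).ncard :=
        (Set.one_lt_ncard).2 ⟨y, ⟨hy, hyu⟩, z, ⟨hz, hzu⟩, hne⟩
      omega

lemma chain_ncard_le (htot : ∀ y : α, y < x ∨ y = x ∨ x < y)
    (hU : IsAntichain (· ≤ ·) (Uset x)) {P T : Set α} (hPT : P ⊆ T)
    (hP : IsChain (· ≤ ·) P) :
    P.ncard ≤ (T ∩ Cset x).ncard + min (T ∩ Uset x).ncard 1 := by
  rw [ncard_decomp htot P]
  have h1 : (P ∩ Cset x).ncard ≤ (T ∩ Cset x).ncard :=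
    Set.ncard_le_ncard (Set.inter_subset_inter_left _ hPT)
  have h2 : (P ∩ Uset x).ncard ≤ (T ∩ Uset x).ncard :=
    Set.ncard_le_ncard (Set.inter_subset_inter_left _ hPT)
  have h3 : (P ∩ Uset x).ncard ≤ 1 := by
    by_contra hc
    obtain ⟨a, ha, b, hb, hab⟩ := (Set.one_lt_ncard (s := P ∩ Uset x)).1 (by omega)
    rcases hP ha.1 hb.1 hab with h | h
    · exact hU ha.2 hb.2 hab h
    · exact hU hb.2 ha.2 (Ne.symm hab) h
  omega

lemma embed_chain (htot : ∀ y : α, y < x ∨ y = x ∨ x < y)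
    (hCh : IsChain (· ≤ ·) (Cset x)) {S T : Set α} (hS : IsChain (· ≤ ·) S)
    (h : S.ncard ≤ (T ∩ Cset x).ncard + min (T ∩ Uset x).ncard 1) :
    Nonempty (↥S ↪o ↥T) := by
  rcases Nat.eq_zero_or_pos (T ∩ Uset x).ncard with h0 | hpos
  · rw [h0] at h
    have h' : S.ncard ≤ (T ∩ Cset x).ncard := by simpa using h
    obtain ⟨f⟩ := chain_embed hS (hCh.mono Set.inter_subset_right) h' 
    exact ⟨f.trans (inclEmb Set.inter_subset_left)⟩
  · obtain ⟨u, hu⟩ := Set.nonempty_of_ncard_ne_zero (s := T ∩ Uset x) (by omega)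
    have hnotmem : u ∉ T ∩ Cset x := fun hc =>
      absurd (hc.2.trans_lt hu.2) (lt_irrefl _)
    have hT' : IsChain (· ≤ ·) (insert u (T ∩ Cset x)) := by
      intro y hy z hz hne
      rcases hy with rfl | hy <;> rcases hz with rfl | hz
      · exact absurd rfl hne
      · exact Or.inr (C_lt_U hz.2 hu.2).le
      · exact Or.inl (C_lt_U hy.2 hu.2).le
      · exact hCh hy.2 hz.2 hne
    have hcard : (insert u (T ∩ Cset x)).ncard = (T ∩ Cset x).ncard + 1 :=
      Set.ncard_insert_of_notMem hnotmem
    obtain ⟨f⟩ := chain_embed hS hT' (by omega)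
    have hsub : insert u (T ∩ Cset x) ⊆ T := by
      rintro y (rfl | hy)
      · exact hu.1
      · exact hy.1
    exact ⟨f.trans (inclEmb hsub)⟩

lemma embed_inv_le (htot : ∀ y : α, y < x ∨ y = x ∨ x < y)
    (hCh : IsChain (· ≤ ·) (Cset x)) (hU : IsAntichain (· ≤ ·) (Uset x)) {S T : Set α}
    (f : ↥S ↪o ↥T) :
    (2 ≤ (S ∩ Uset x).ncard →
      (S ∩ Cset x).ncard ≤ (T ∩ Cset x).ncard ∧
      (S ∩ Uset x).ncard ≤ (T ∩ Uset x).ncard) ∧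
    ((S ∩ Uset x).ncard ≤ 1 →
      S.ncard ≤ (T ∩ Cset x).ncard + min (T ∩ Uset x).ncard 1) := by
  constructor
  · intro h2
    have key : ∀ u : ↥S, (u : α) ∈ Uset x → (f u : α) ∈ Uset x := by
      intro u huU
      obtain ⟨a, ha, b, hb, hab⟩ := (Set.one_lt_ncard (s := S ∩ Uset x)).1 (by omega)
      have hex : ∃ v, v ∈ S ∩ Uset x ∧ v ≠ (u : α) := by
        rcases eq_or_ne a (u : α) with rfl | hau
        · exact ⟨b, hb, fun hbu => hab hbu.symm⟩
        · exact ⟨a, ha, hau⟩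
      obtain ⟨v, hv, hvu⟩ := hex
      have hvu' : ¬ (v : α) ≤ u := hU hv.2 huU hvu
      have huv' : ¬ (u : α) ≤ v := hU huU hv.2 (Ne.symm hvu)
      set v' : ↥S := ⟨v, hv.1⟩ with hv'
      have h1 : ¬ (f u ≤ f v') := fun hc => huv' (f.map_rel_iff.1 hc)
      have h2' : ¬ (f v' ≤ f u) := fun hc => hvu' (f.map_rel_iff.1 hc)
      exact (incomp_mem_U htot hCh h1 h2').1
    have keyC : ∀ s : ↥S, (s : α) ∈ Cset x → (f s : α) ∈ Cset x := by
      intro s hsC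
      obtain ⟨u, hu⟩ := Set.nonempty_of_ncard_ne_zero (s := S ∩ Uset x) (by omega)
      set u' : ↥S := ⟨u, hu.1⟩ with hu'
      have hfu := key u' hu.2
      have hlt : s < u' := Subtype.coe_lt_coe.1 (C_lt_U hsC hu.2)
      have hflt : f s < f u' := f.strictMono hlt
      rcases mem_C_or_U htot (f s : α) with h | h
      · exact h
      · exact absurd (Subtype.coe_le_coe.2 hflt.le) (hU h hfu (fun hc => hflt.ne (Subtype.ext hc)))
    classical
    set e : α → α := fun y => if h : y ∈ S then (f ⟨y, h⟩ : α) else y with he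
    have heval : ∀ y (h : y ∈ S), e y = (f ⟨y, h⟩ : α) := by
      intro y h; simp only [he, dif_pos h]
    have hinjOn : Set.InjOn e S := by
      intro y hy z hz hyz
      rw [heval y hy, heval z hz] at hyz
      exact congrArg Subtype.val (f.injective (Subtype.ext hyz))
    constructor
    · have hsub : e '' (S ∩ Cset x) ⊆ T ∩ Cset x := by
        rintro - ⟨y, hy, rfl⟩
        rw [heval y hy.1]
        exact ⟨(f ⟨y, hy.1⟩).2, keyC ⟨y, hy.1⟩ hy.2⟩
      calc (S ∩ Cset x).ncard = (e '' (S ∩ Cset x)).ncard :=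
            (Set.ncard_image_of_injOn (hinjOn.mono Set.inter_subset_left)).symm
        _ ≤ (T ∩ Cset x).ncard := Set.ncard_le_ncard hsub
    · have hsub : e '' (S ∩ Uset x) ⊆ T ∩ Uset x := by
        rintro - ⟨y, hy, rfl⟩
        rw [heval y hy.1]
        exact ⟨(f ⟨y, hy.1⟩).2, key ⟨y, hy.1⟩ hy.2⟩
      calc (S ∩ Uset x).ncard = (e '' (S ∩ Uset x)).ncard :=
            (Set.ncard_image_of_injOn (hinjOn.mono Set.inter_subset_left)).symm
        _ ≤ (T ∩ Uset x).ncard := Set.ncard_le_ncard hsub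
  · intro h1
    classical
    have hSchain := chain_of_small htot hCh h1
    set e : α → α := fun y => if h : y ∈ S then (f ⟨y, h⟩ : α) else y with he
    have heval : ∀ y (h : y ∈ S), e y = (f ⟨y, h⟩ : α) := by
      intro y h; simp only [he, dif_pos h]
    have hinjOn : Set.InjOn e S := by
      intro y hy z hz hyz
      rw [heval y hy, heval z hz] at hyz
      exact congrArg Subtype.val (f.injective (Subtype.ext hyz))
    have hPsub : e '' S ⊆ T := by
      rintro - ⟨y, hy, rfl⟩
      rw [heval y hy]
      exact (f ⟨y, hy⟩).2
    have hPchain : IsChain (· ≤ ·) (e '' S) := by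
      rintro - ⟨y, hy, rfl⟩ - ⟨z, hz, rfl⟩ hne
      have hyz : y ≠ z := fun hc => hne (by rw [hc])
      rcases hSchain hy hz hyz with h | h
      · refine Or.inl ?_
        rw [heval y hy, heval z hz]
        exact Subtype.coe_le_coe.2 (f.monotone (Subtype.mk_le_mk.2 h))
      · refine Or.inr ?_
        rw [heval y hy, heval z hz]
        exact Subtype.coe_le_coe.2 (f.monotone (Subtype.mk_le_mk.2 h))
    have := chain_ncard_le htot hU hPsub hPchain
    rwa [Set.ncard_image_of_injOn hinjOn] at this


lemma ncard_fin_band (N lo hi : ℕ) (h : hi ≤ N) :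
    {i : Fin N | lo ≤ i.val ∧ i.val < hi}.ncard = hi - lo := by
  have himg : Fin.val '' {i : Fin N | lo ≤ i.val ∧ i.val < hi} = Set.Ico lo hi := by
    ext m
    constructor
    · rintro ⟨i, hi', rfl⟩; exact ⟨hi'.1, hi'.2⟩
    · intro hm; exact ⟨⟨m, lt_of_lt_of_le hm.2 h⟩, ⟨hm.1, hm.2⟩, rfl⟩
  rw [← Set.ncard_image_of_injective _ Fin.val_injective, himg, ← Finset.coe_Ico,
    Set.ncard_coe_finset, Nat.card_Ico]

noncomputable def cN (x : α) (S : Set α) : ℕ :=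
  if 2 ≤ (S ∩ Uset x).ncard then (S ∩ Cset x).ncard
  else (S ∩ Cset x).ncard + (S ∩ Uset x).ncard - 1

noncomputable def aN (x : α) (S : Set α) : ℕ :=
  if 2 ≤ (S ∩ Uset x).ncard then (S ∩ Uset x).ncard
  else min ((S ∩ Cset x).ncard + (S ∩ Uset x).ncard) 1

lemma embed_iff (htot : ∀ y : α, y < x ∨ y = x ∨ x < y)
    (hCh : IsChain (· ≤ ·) (Cset x)) (hU : IsAntichain (· ≤ ·) (Uset x)) (S T : Set α) :
    Nonempty (↥S ↪o ↥T) ↔ cN x S ≤ cN x T ∧ aN x S ≤ aN x T := by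
  unfold cN aN
  have hdS := ncard_decomp htot S
  have hdT := ncard_decomp htot T
  by_cases h2S : 2 ≤ (S ∩ Uset x).ncard <;> by_cases h2T : 2 ≤ (T ∩ Uset x).ncard
  · rw [if_pos h2S, if_pos h2T, if_pos h2S, if_pos h2T]
    constructor
    · rintro ⟨f⟩; exact (embed_inv_le htot hCh hU f).1 h2S
    · rintro ⟨hc, ha⟩; exact embed_of_le htot hCh hU hc ha
  · rw [if_pos h2S, if_neg h2T, if_pos h2S, if_neg h2T]
    refine iff_of_false ?_ ?_
    · rintro ⟨f⟩
      have := ((embed_inv_le htot hCh hU f).1 h2S).2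
      omega
    · rintro ⟨-, ha⟩
      omega
  · rw [if_neg h2S, if_pos h2T, if_neg h2S, if_pos h2T]
    constructor
    · rintro ⟨f⟩
      have hle := (embed_inv_le htot hCh hU f).2 (by omega)
      constructor
      · omega
      · omega
    · rintro ⟨hc, ha⟩
      refine embed_chain htot hCh (chain_of_small htot hCh (by omega)) ?_
      omega
  · rw [if_neg h2S, if_neg h2T, if_neg h2S, if_neg h2T]
    constructor
    · rintro ⟨f⟩
      have hle := (embed_inv_le htot hCh hU f).2 (by omega)
      constructor
      · omega
      · omega
    · rintro ⟨hc, ha⟩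
      refine embed_chain htot hCh (chain_of_small htot hCh (by omega)) ?_
      omega


lemma cN_aN_eq (htot : ∀ y : α, y < x ∨ y = x ∨ x < y) {S T : Set α}
    (hc : (T ∩ Cset x).ncard = cN x S) (ha : (T ∩ Uset x).ncard = aN x S) :
    cN x T = cN x S ∧ aN x T = aN x S := by
  unfold cN aN at *
  split_ifs at * <;> omega

end flower

def SubRepresentable (α : Type*) [PartialOrder α] : Prop :=
  ∃ g : Set α → Set α,
    (∀ P₁ P₂ : Set α, Nonempty (↥P₁ ↪o ↥P₂) ↔ g P₁ ⊆ g P₂) ∧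
    ∀ P₁ : Set α, Nonempty (↥P₁ ↪o ↥(g P₁)) ∧ Nonempty (↥(g P₁) ↪o ↥P₁)
def IsFlower (α : Type*) [PartialOrder α] : Prop :=
  ∃ x : α, IsChain (· ≤ ·) {y : α | y < x} ∧
    IsAntichain (· ≤ ·) {y : α | x < y} ∧ ({y : α | x < y}).Nontrivial ∧
    ∀ y : α, y < x ∨ y = x ∨ x < y

theorem finite_flower_subrep (α : Type*) [PartialOrder α] [Finite α]
    (h : IsFlower α) : SubRepresentable α := by
  obtain ⟨x, h1, hU0, h3, htot⟩ := h
  have hCh : IsChain (· ≤ ·) (Cset x) := Cset_chain h1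
  have hU : IsAntichain (· ≤ ·) (Uset x) := hU0
  have hM : 2 ≤ (Uset x).ncard := by
    obtain ⟨a, ha, b, hb, hne⟩ := h3
    exact (Set.one_lt_ncard (s := Uset x)).2 ⟨a, ha, b, hb, hne⟩
  classical
  set N := (Cset x).ncard with hN
  set M := (Uset x).ncard with hMdef
  letI := chainLO hCh
  haveI : Fintype ↥(Cset x) := Fintype.ofFinite _
  have hcardC : Fintype.card ↥(Cset x) = N := by
    rw [← Nat.card_eq_fintype_card, Nat.card_coe_set_eq]
  have hcardU : Nat.card ↥(Uset x) = M := Nat.card_coe_set_eq _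
  let eC := Fintype.orderIsoFinOfCardEq ↥(Cset x) hcardC
  let eU : ↥(Uset x) ≃ Fin M := (Finite.equivFin _).trans (finCongr hcardU)
  let topC : ℕ → Set α := fun c => Subtype.val '' (⇑eC '' {i : Fin N | N - c ≤ i.val})
  let FU : ℕ → Set α := fun a => Subtype.val '' (⇑eU.symm '' {i : Fin M | i.val < a})
  have htopC_sub : ∀ c, topC c ⊆ Cset x := by rintro c - ⟨y, -, rfl⟩; exact y.2
  have hFU_sub : ∀ a, FU a ⊆ Uset x := by rintro a - ⟨y, -, rfl⟩; exact y.2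
  have htopC_mono : ∀ {c₁ c₂ : ℕ}, c₁ ≤ c₂ → topC c₁ ⊆ topC c₂ := by
    intro c₁ c₂ hc
    apply Set.image_mono
    apply Set.image_mono
    intro i hi
    simp only [Set.mem_setOf_eq] at *
    omega
  have hFU_mono : ∀ {a₁ a₂ : ℕ}, a₁ ≤ a₂ → FU a₁ ⊆ FU a₂ := by
    intro a₁ a₂ ha
    apply Set.image_mono
    apply Set.image_mono
    intro i hi
    simp only [Set.mem_setOf_eq] at *
    omega
  have htopC_card : ∀ c, c ≤ N → (topC c).ncard = c := by
    intro c hc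
    have h1' : {i : Fin N | N - c ≤ i.val} = {i : Fin N | N - c ≤ i.val ∧ i.val < N} := by
      ext i; exact ⟨fun h => ⟨h, i.isLt⟩, fun h => h.1⟩
    simp only [topC]
    rw [Set.ncard_image_of_injective _ Subtype.coe_injective,
      Set.ncard_image_of_injective _ eC.injective, h1',
      ncard_fin_band _ _ _ le_rfl]
    omega
  have hFU_card : ∀ a, a ≤ M → (FU a).ncard = a := by
    intro a ha
    have h1' : {i : Fin M | i.val < a} = {i : Fin M | 0 ≤ i.val ∧ i.val < a} := by
      ext i; exact ⟨fun h => ⟨Nat.zero_le _, h⟩, fun h => h.2⟩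
    simp only [FU]
    rw [Set.ncard_image_of_injective _ Subtype.coe_injective,
      Set.ncard_image_of_injective _ eU.symm.injective, h1',
      ncard_fin_band _ _ _ ha]
    omega
  have htopC_le : ∀ {c₁ c₂ : ℕ}, c₁ ≤ N → c₂ ≤ N → topC c₁ ⊆ topC c₂ → c₁ ≤ c₂ := by
    intro c₁ c₂ h₁ h₂ hsub
    rw [← htopC_card c₁ h₁, ← htopC_card c₂ h₂]
    exact Set.ncard_le_ncard hsub
  have hFU_le : ∀ {a₁ a₂ : ℕ}, a₁ ≤ M → a₂ ≤ M → FU a₁ ⊆ FU a₂ → a₁ ≤ a₂ := by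
    intro a₁ a₂ h₁ h₂ hsub
    rw [← hFU_card a₁ h₁, ← hFU_card a₂ h₂]
    exact Set.ncard_le_ncard hsub
  have hcN_le : ∀ S, cN x S ≤ N := by
    intro S
    have hcS : (S ∩ Cset x).ncard ≤ N := Set.ncard_le_ncard Set.inter_subset_right
    unfold cN
    split
    · exact hcS
    · omega
  have haN_le : ∀ S, aN x S ≤ M := by
    intro S
    have haS : (S ∩ Uset x).ncard ≤ M := Set.ncard_le_ncard Set.inter_subset_right
    unfold aN
    split
    · exact haS
    · omega
  have hdisj : ∀ {c a : ℕ} {y : α}, y ∈ topC c → y ∈ FU a → False := by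
    intro c a y hy1 hy2
    exact C_U_disj (htopC_sub _ hy1) (hFU_sub _ hy2)
  set g : Set α → Set α := fun S => topC (cN x S) ∪ FU (aN x S) with hg
  have hsub_iff : ∀ S T, g S ⊆ g T ↔ (cN x S ≤ cN x T ∧ aN x S ≤ aN x T) := by
    intro S T
    constructor
    · intro hsub
      constructor
      · refine htopC_le (hcN_le S) (hcN_le T) ?_
        intro y hy
        rcases hsub (Or.inl hy) with h | h
        · exact h
        · exact (hdisj hy h).elim
      · refine hFU_le (haN_le S) (haN_le T) ?_
        intro y hy
        rcases hsub (Or.inr hy) with h | h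
        · exact (hdisj h hy).elim
        · exact h
    · rintro ⟨hc, ha⟩
      exact Set.union_subset_union (htopC_mono hc) (hFU_mono ha)
  have hg_inter_C : ∀ S, g S ∩ Cset x = topC (cN x S) := by
    intro S
    ext y
    constructor
    · rintro ⟨h1' | h1', h2⟩
      · exact h1'
      · exact (C_U_disj h2 (hFU_sub _ h1')).elim
    · intro hy
      exact ⟨Or.inl hy, htopC_sub _ hy⟩
  have hg_inter_U : ∀ S, g S ∩ Uset x = FU (aN x S) := by
    intro S
    ext y
    constructor
    · rintro ⟨h1' | h1', h2⟩
      · exact (C_U_disj (htopC_sub _ h1') h2).elim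
      · exact h1'
    · intro hy
      exact ⟨Or.inr hy, hFU_sub _ hy⟩
  have hinv : ∀ S, cN x (g S) = cN x S ∧ aN x (g S) = aN x S := by
    intro S
    refine cN_aN_eq htot ?_ ?_
    · rw [hg_inter_C]; exact htopC_card _ (hcN_le S)
    · rw [hg_inter_U]; exact hFU_card _ (haN_le S)
  refine ⟨g, fun S T => (embed_iff htot hCh hU S T).trans (hsub_iff S T).symm, fun S => ?_⟩
  constructor
  · exact (embed_iff htot hCh hU S (g S)).2 ⟨(hinv S).1.ge, (hinv S).2.ge⟩
  · exact (embed_iff htot hCh hU (g S) S).2 ⟨(hinv S).1.le, (hinv S).2.le⟩
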